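/- Under the transient-state structure, the matrix Q̃_* is invertible, every entry of the vector a_{m_k} = −Q̃_*^{-1} Q̃^k_* 𝟙_{m_k} ∈ ℝ^{m_*} is nonnegative for each k = 1,…,l, and Σ_{k=1}^l a_{m_k} = 𝟙_{m_*} entrywise, i.e., Σ_{k=1}^l a_{m_k,j} = 1 for every j = 1,…,m_*. -/

import Mathlib

open MeasureTheory Filter
open scoped BigOperators Topology

/-- `Q` is the generator matrix of a continuous-time Markov chain:
off-diagonal entries are nonnegative and each row sums to zero. -/
def IsGenerator {S : Type*} [Fintype S] (Q : Matrix S S ℝ) : Prop :=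
  (∀ i j, i ≠ j → 0 ≤ Q i j) ∧ ∀ i, ∑ j, Q i j = 0

/-- `f : [0,T] × S → ℝ` is bounded and measurable (in time, for each state). -/
def BddMeasOn {S : Type*} [Fintype S] (T : ℝ) (f : ℝ → S → ℝ) : Prop :=
  (∀ i, Measurable fun t => f t i) ∧
    ∃ C : ℝ, ∀ t ∈ Set.Icc (0:ℝ) T, ∀ i, |f t i| ≤ C

/-- `P` is a solution of the P-system associated with `(ρ, r, Q)` on `[0,T]`:
`P` is continuous on `[0,T]` and
`P(t,i) = 1 - ∫_t^T [P(s,i)(ρ(s,i) - 2 r(s,i)) - Σ_j q_{ij} P(s,j)] ds`. -/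
def IsPSol {S : Type*} [Fintype S] (T : ℝ) (Q : Matrix S S ℝ)
    (ρ r : ℝ → S → ℝ) (P : ℝ → S → ℝ) : Prop :=
  (∀ i, ContinuousOn (fun t => P t i) (Set.Icc 0 T)) ∧
    ∀ t ∈ Set.Icc (0:ℝ) T, ∀ i,
      P t i = 1 - ∫ s in t..T, (P s i * (ρ s i - 2 * r s i) - ∑ j, Q i j * P s j)

/-- `H` is a solution of the H-system associated with `(r, Q, P)` on `[0,T]`:
`H` is continuous on `[0,T]` and
`H(t,i) = 1 - ∫_t^T [H(s,i) r(s,i) - (1/P(s,i)) Σ_j q_{ij} P(s,j) H(s,j)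
  + (H(s,i)/P(s,i)) Σ_j q_{ij} P(s,j)] ds`. -/
def IsHSol {S : Type*} [Fintype S] (T : ℝ) (Q : Matrix S S ℝ)
    (r : ℝ → S → ℝ) (P : ℝ → S → ℝ) (H : ℝ → S → ℝ) : Prop :=
  (∀ i, ContinuousOn (fun t => H t i) (Set.Icc 0 T)) ∧
    ∀ t ∈ Set.Icc (0:ℝ) T, ∀ i,
      H t i = 1 - ∫ s in t..T,
        (H s i * r s i - (1 / P s i) * ∑ j, Q i j * P s j * H s j
          + (H s i / P s i) * ∑ j, Q i j * P s j)

/-- The kernel of `Q`, acting on column vectors, is spanned by the all-ones vector. -/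
def KerSpannedByOnes {S : Type*} [Fintype S] (Q : Matrix S S ℝ) : Prop :=
  ∀ v : S → ℝ, Q.mulVec v = 0 → ∃ c : ℝ, ∀ j, v j = c

/-- `A` is Hurwitz: every (complex) eigenvalue of `A` has negative real part. -/
def IsHurwitz {n : ℕ} (A : Matrix (Fin n) (Fin n) ℝ) : Prop :=
  ∀ z : ℂ, z ∈ spectrum ℂ (A.map Complex.ofReal) → z.re < 0

/-- For the transient-state structure (states `(Σ k, Fin (m_k)) ⊕ Fin m_*`, with
`Q̃_*` the transient-transient block and `Q̃^k_*` the transient-to-block-`k` block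
of `Q̃`), the vector `a_{m_k} = -Q̃_*⁻¹ Q̃^k_* 𝟙_{m_k} ∈ ℝ^{m_*}`. -/
noncomputable def aVec (l : ℕ) (mk : Fin l → ℕ) (ms : ℕ)
    (Qt : Matrix ((Σ k : Fin l, Fin (mk k)) ⊕ Fin ms)
      ((Σ k : Fin l, Fin (mk k)) ⊕ Fin ms) ℝ) (k : Fin l) : Fin ms → ℝ :=
  -((Matrix.of fun i j : Fin ms => Qt (Sum.inr i) (Sum.inr j))⁻¹.mulVec
      fun j => ∑ i : Fin (mk k), Qt (Sum.inr j) (Sum.inl ⟨k, i⟩))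

lemma min_principle_aux {n : ℕ} (A : Matrix (Fin n) (Fin n) ℝ) (hdet : A.det ≠ 0)
    (hoff : ∀ i j, i ≠ j → 0 ≤ A i j) (hrow : ∀ i, ∑ j, A i j ≤ 0)
    (x b : Fin n → ℝ) (hb : ∀ i, 0 ≤ b i)
    (hx : ∀ i, ∑ j, A i j * x j = - b i) :
    ∀ j, 0 ≤ x j := by
  classical
  by_contra h
  push_neg at h
  obtain ⟨j0, hj0⟩ := h
  have hn : (Finset.univ : Finset (Fin n)).Nonempty := ⟨j0, Finset.mem_univ _⟩
  obtain ⟨i0, -, hi0⟩ := Finset.exists_min_image Finset.univ x hn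
  have hmin : ∀ m, x i0 ≤ x m := fun m => hi0 m (Finset.mem_univ m)
  have hneg : x i0 < 0 := lt_of_le_of_lt (hmin j0) hj0
  set S : Finset (Fin n) := Finset.univ.filter (fun m => x m = x i0) with hS
  have hi0S : i0 ∈ S := by simp [hS]
  have key : ∀ j ∈ S, (∀ m, m ∉ S → A j m = 0) ∧ (∑ m, A j m = 0) := by
    intro j hj
    have hxj : x j = x i0 := (Finset.mem_filter.mp hj).2
    have h1 : ∀ m, 0 ≤ A j m * (x m - x j) := by
      intro m
      rcases eq_or_ne m j with rfl | hne
      · simp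
      · exact mul_nonneg (hoff j m hne.symm) (by rw [hxj]; linarith [hmin m])
    have hsum : ∑ m, A j m * (x m - x j) = - b j - (∑ m, A j m) * x j := by
      simp only [mul_sub, Finset.sum_sub_distrib, ← Finset.sum_mul, hx j]
    have hLHS : 0 ≤ ∑ m, A j m * (x m - x j) := Finset.sum_nonneg fun m _ => h1 m
    have hxjn : x j < 0 := by rw [hxj]; exact hneg
    have hRHS : (0:ℝ) ≤ (∑ m, A j m) * x j := by nlinarith [hrow j]
    have hbj := hb j
    have heq0 : ∑ m, A j m * (x m - x j) = 0 := by linarith [hsum]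
    have hrow0 : (∑ m, A j m) = 0 := by
      have h2 : (∑ m, A j m) * x j = 0 := by linarith [hsum]
      have hxne : x j ≠ 0 := by rw [hxj]; exact ne_of_lt hneg
      exact (mul_eq_zero.mp h2).resolve_right hxne
    refine ⟨?_, hrow0⟩
    intro m hm
    have hterm : A j m * (x m - x j) = 0 :=
      (Finset.sum_eq_zero_iff_of_nonneg (fun m _ => h1 m)).mp heq0 m (Finset.mem_univ m)
    have hxm : x m ≠ x j := by
      intro hc
      exact hm (by simp [hS, hc ▸ hxj])
    exact (mul_eq_zero.mp hterm).resolve_right (sub_ne_zero_of_ne hxm)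
  let B : Matrix {m // m ∈ S} {m // m ∈ S} ℝ := fun p q => A p q
  have hB1 : B.mulVec (fun _ => 1) = 0 := by
    funext p
    have hp := key p p.2
    simp only [Matrix.mulVec, dotProduct, mul_one, Pi.zero_apply, B]
    have h2 : ∑ q : {m // m ∈ S}, A p q = ∑ m ∈ S, A p m :=
      Finset.sum_coe_sort S (fun m => A p m)
    rw [h2, Finset.sum_subset (Finset.subset_univ S) (fun m _ hm => hp.1 m hm)]
    exact hp.2
  have hdetB : B.det = 0 := by
    rw [← Matrix.exists_mulVec_eq_zero_iff]
    refine ⟨fun _ => 1, ?_, hB1⟩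
    intro hc
    have := congrFun hc ⟨i0, hi0S⟩
    norm_num at this
  have hdetBT : B.transpose.det = 0 := by rw [Matrix.det_transpose]; exact hdetB
  obtain ⟨u, hu0, huv⟩ := Matrix.exists_mulVec_eq_zero_iff.mpr hdetBT
  let v : Fin n → ℝ := fun m => if h : m ∈ S then u ⟨m, h⟩ else 0
  have hv0 : v ≠ 0 := by
    obtain ⟨p, hp⟩ := Function.ne_iff.mp hu0
    intro hc
    apply hp
    have h3 := congrFun hc p.1
    simpa [v, p.2] using h3
  have hAT : A.transpose.mulVec v = 0 := by
    funext m
    simp only [Matrix.mulVec, dotProduct, Matrix.transpose_apply, Pi.zero_apply]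
    have hsub : ∑ j, A j m * v j = ∑ j ∈ S, A j m * v j := by
      refine (Finset.sum_subset (Finset.subset_univ S) ?_).symm
      intro j _ hj; simp [v, hj]
    rw [hsub, ← Finset.sum_coe_sort S (fun j => A j m * v j)]
    by_cases hm : m ∈ S
    · have h4 := congrFun huv ⟨m, hm⟩
      simpa [Matrix.mulVec, dotProduct, Matrix.transpose_apply, v, B, Matrix.transpose, Matrix.of_apply,
        fun (j : {m // m ∈ S}) => dif_pos j.2] using h4
    · apply Finset.sum_eq_zero
      intro j _
      rw [(key j j.2).1 m hm, zero_mul]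
  have hfin : A.transpose.det = 0 := Matrix.exists_mulVec_eq_zero_iff.mp ⟨v, hv0, hAT⟩
  rw [Matrix.det_transpose] at hfin
  exact hdet hfin

/-- under the transient-state structure, `Q̃_*` is invertible,
each vector `a_{m_k} = -Q̃_*⁻¹ Q̃^k_* 𝟙_{m_k}` has nonnegative entries, and
`Σ_{k=1}^l a_{m_k} = 𝟙_{m_*}` entrywise. -/
theorem aVec_nonneg_sum_one
    (l : ℕ) (hl : 1 ≤ l) (mk : Fin l → ℕ) (hmk : ∀ k, 1 ≤ mk k)
    (ms : ℕ) (hms : 1 ≤ ms)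
    (Qt : Matrix ((Σ k : Fin l, Fin (mk k)) ⊕ Fin ms)
      ((Σ k : Fin l, Fin (mk k)) ⊕ Fin ms) ℝ)
    (hQtgen : IsGenerator Qt)
    (hQtUR : ∀ (p : Σ k : Fin l, Fin (mk k)) (j : Fin ms),
      Qt (Sum.inl p) (Sum.inr j) = 0)
    (hQtblock : ∀ p q : Σ k : Fin l, Fin (mk k), p.1 ≠ q.1 →
      Qt (Sum.inl p) (Sum.inl q) = 0)
    (hQtblkgen : ∀ k : Fin l, IsGenerator
      (Matrix.of fun i j : Fin (mk k) => Qt (Sum.inl ⟨k, i⟩) (Sum.inl ⟨k, j⟩)))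
    (hQtblkker : ∀ k : Fin l, KerSpannedByOnes
      (Matrix.of fun i j : Fin (mk k) => Qt (Sum.inl ⟨k, i⟩) (Sum.inl ⟨k, j⟩)))
    (hQtHurwitz : IsHurwitz
      (Matrix.of fun i j : Fin ms => Qt (Sum.inr i) (Sum.inr j))) :
    IsUnit (Matrix.of fun i j : Fin ms => Qt (Sum.inr i) (Sum.inr j)).det ∧
    (∀ (k : Fin l) (j : Fin ms), 0 ≤ aVec l mk ms Qt k j) ∧
    (∀ j : Fin ms, ∑ k : Fin l, aVec l mk ms Qt k j = 1) := by
  classical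
  set A : Matrix (Fin ms) (Fin ms) ℝ :=
    Matrix.of fun i j : Fin ms => Qt (Sum.inr i) (Sum.inr j) with hAdef
  have hdet : A.det ≠ 0 := by
    intro hdet
    have h0 : (0:ℂ) ∈ spectrum ℂ (A.map Complex.ofReal) := by
      rw [spectrum.mem_iff]
      intro hu
      rw [map_zero, zero_sub, IsUnit.neg_iff, Matrix.isUnit_iff_isUnit_det] at hu
      have hmap : (A.map Complex.ofReal).det = Complex.ofReal A.det := by
        rw [show A.map Complex.ofReal = Complex.ofRealHom.mapMatrix A from rfl,
          ← RingHom.map_det]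
        rfl
      rw [hmap, hdet, Complex.ofReal_zero] at hu
      exact hu.ne_zero rfl
    have := hQtHurwitz 0 h0
    norm_num at this
  have hunit : IsUnit A.det := isUnit_iff_ne_zero.mpr hdet
  have hoff : ∀ i j : Fin ms, i ≠ j → 0 ≤ A i j := fun i j hij =>
    hQtgen.1 _ _ (by simp [hij])
  have hinl : ∀ (i : Fin ms) (p : Σ k : Fin l, Fin (mk k)),
      0 ≤ Qt (Sum.inr i) (Sum.inl p) := fun i p => hQtgen.1 _ _ (by simp)
  have hsplit : ∀ i : Fin ms,
      (∑ p : Σ k : Fin l, Fin (mk k), Qt (Sum.inr i) (Sum.inl p)) + ∑ j, A i j = 0 := by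
    intro i
    have h := hQtgen.2 (Sum.inr i)
    rw [Fintype.sum_sum_type] at h
    exact h
  have hrow : ∀ i, ∑ j, A i j ≤ 0 := by
    intro i
    have h1 : 0 ≤ ∑ p : Σ k : Fin l, Fin (mk k), Qt (Sum.inr i) (Sum.inl p) :=
      Finset.sum_nonneg fun p _ => hinl i p
    linarith [hsplit i]
  have hxk : ∀ (k : Fin l) (i : Fin ms),
      ∑ j, A i j * aVec l mk ms Qt k j
        = -(∑ t : Fin (mk k), Qt (Sum.inr i) (Sum.inl ⟨k, t⟩)) := by
    intro k i
    have h1 : A.mulVec (aVec l mk ms Qt k)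
        = -(fun j : Fin ms => ∑ t : Fin (mk k), Qt (Sum.inr j) (Sum.inl ⟨k, t⟩)) := by
      show A.mulVec (-(A⁻¹.mulVec _)) = _
      rw [Matrix.mulVec_neg, Matrix.mulVec_mulVec, Matrix.mul_nonsing_inv _ hunit,
        Matrix.one_mulVec]
    have h2 := congrFun h1 i
    simpa [Matrix.mulVec, dotProduct] using h2
  refine ⟨hunit, ?_, ?_⟩
  · intro k j
    exact min_principle_aux A hdet hoff hrow (aVec l mk ms Qt k)
      (fun i => ∑ t : Fin (mk k), Qt (Sum.inr i) (Sum.inl ⟨k, t⟩))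
      (fun i => Finset.sum_nonneg fun t _ => hinl i ⟨k, t⟩)
      (fun i => hxk k i) j
  · have hy : A.mulVec (fun j => ∑ k, aVec l mk ms Qt k j)
        = A.mulVec (fun _ => 1) := by
      funext i
      simp only [Matrix.mulVec, dotProduct, mul_one]
      calc ∑ j, A i j * ∑ k, aVec l mk ms Qt k j
          = ∑ k, ∑ j, A i j * aVec l mk ms Qt k j := by
            simp_rw [Finset.mul_sum]
            rw [Finset.sum_comm]
        _ = ∑ k, -(∑ t : Fin (mk k), Qt (Sum.inr i) (Sum.inl ⟨k, t⟩)) := by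
            exact Finset.sum_congr rfl fun k _ => hxk k i
        _ = -(∑ p : Σ k : Fin l, Fin (mk k), Qt (Sum.inr i) (Sum.inl p)) := by
            rw [← Finset.sum_neg_distrib, ← Finset.univ_sigma_univ, Finset.sum_sigma]
            simp [Finset.sum_neg_distrib]
        _ = ∑ j, A i j := by linarith [hsplit i]
    have h3 := congrArg (fun w => A⁻¹.mulVec w) hy
    simp only [Matrix.mulVec_mulVec, Matrix.nonsing_inv_mul _ hunit, Matrix.one_mulVec] at h3
    intro j
    exact congrFun h3 j
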